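/- Consider the planar autonomous vector field V(θ, x) = (2λx + x cos θ − sin θ, x cos θ) on ℝ² with λ ≠ 0. Its singular points in the strip [−π, π] × [0, ∞) are exactly (0,0), (±π, 0), together with (π/2, 1/(2λ)) if λ > 0 and (−π/2, −1/(2λ)) if λ < 0. At Q = (π/2, 1/(2λ)) (for λ > 0), the eigenvalues of the linearization are (−1 ± √(1 − 16λ²))/(4λ); hence both eigenvalues have negative real part, and they are non-real (Q is a stable spiral point) if and only if λ > 1/4. -/

import Mathlib

open Polynomial

private lemma sinz19 {θ : ℝ} (h1 : -Real.pi ≤ θ) (h2 : θ ≤ Real.pi) (hs : Real.sin θ = 0) :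
    θ = 0 ∨ θ = Real.pi ∨ θ = -Real.pi := by
  obtain ⟨n, hn⟩ := Real.sin_eq_zero_iff.1 hs
  have hpi := Real.pi_pos
  have hb1 : (-1:ℝ) ≤ (n:ℝ) := by nlinarith
  have hb2 : (n:ℝ) ≤ 1 := by nlinarith
  have hn1' : (-1:ℤ) ≤ n := by exact_mod_cast hb1
  have hn2' : n ≤ (1:ℤ) := by exact_mod_cast hb2
  interval_cases n
  · right; right; push_cast at hn; linarith
  · left; push_cast at hn; linarith
  · right; left; push_cast at hn; linarith

private lemma cosz19 {θ : ℝ} (h1 : -Real.pi ≤ θ) (h2 : θ ≤ Real.pi) (hc : Real.cos θ = 0) :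
    θ = Real.pi/2 ∨ θ = -(Real.pi/2) := by
  obtain ⟨k, hk⟩ := Real.cos_eq_zero_iff.1 hc
  have hpi := Real.pi_pos
  have hb1 : (-2:ℝ) < (k:ℝ) := by nlinarith
  have hb2 : (k:ℝ) < 1 := by nlinarith
  have hk1 : (-2:ℤ) < k := by exact_mod_cast hb1
  have hk2 : k < (1:ℤ) := by exact_mod_cast hb2
  have hk1' : (-1:ℤ) ≤ k := by omega
  have hk2' : k ≤ (0:ℤ) := by omega
  interval_cases k
  · right; rw [hk]; push_cast; ring
  · left; rw [hk]; push_cast; ring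

private lemma fact19 (lam : ℝ) (hp : 0 < lam) (c μ : ℂ) (hc : c^2 = 1 - 16*(lam:ℂ)^2) :
    μ^2 + (1/(2*(lam:ℂ)))*μ + 1 = (μ - (-1+c)/(4*(lam:ℂ))) * (μ - (-1-c)/(4*(lam:ℂ))) := by
  have hL : (lam:ℂ) ≠ 0 := Complex.ofReal_ne_zero.2 (ne_of_gt hp)
  field_simp
  ring_nf
  linear_combination 2 * hc

private lemma parts19 (lam : ℝ) (hp : 0 < lam) (μ : ℂ)
    (h : μ^2 + (1/(2*(lam:ℂ)))*μ + 1 = 0) :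
    2*lam*(μ.re^2 - μ.im^2) + μ.re + 2*lam = 0 ∧ μ.im*(4*lam*μ.re + 1) = 0 := by
  have hL : (lam:ℂ) ≠ 0 := Complex.ofReal_ne_zero.2 (ne_of_gt hp)
  field_simp at h
  simp only [Complex.ext_iff, Complex.add_re, Complex.add_im, Complex.mul_re, Complex.mul_im,
    Complex.ofReal_re, Complex.ofReal_im, Complex.one_re, Complex.one_im, Complex.zero_re,
    Complex.zero_im, pow_two, Complex.re_ofNat, Complex.im_ofNat] at h
  obtain ⟨hre, him⟩ := h
  constructor
  · linear_combination hre
  · linear_combination him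

/-- The phase-plane vector field `V(θ, x) = (2λx + x cos θ - sin θ, x cos θ)` of
rotational `λ`-translating solitons (`λ ≠ 0`): its singular points in
`[-π, π] × [0, ∞)` are exactly `(0,0)`, `(±π, 0)` together with `(π/2, 1/(2λ))` if
`λ > 0` and `(-π/2, -1/(2λ))` if `λ < 0`.  For `λ > 0`, the linearization at
`Q = (π/2, 1/(2λ))` is `[[-1/(2λ), 2λ], [-1/(2λ), 0]]`, with characteristic
polynomial `μ² + μ/(2λ) + 1`, whose roots are `(-1 ± √(1-16λ²))/(4λ)`; both roots
have negative real part, and they are non-real (stable spiral point) iff `λ > 1/4`. -/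
theorem stmt19 (lam : ℝ) (hlam : lam ≠ 0)
    (V : ℝ × ℝ → ℝ × ℝ)
    (hV : ∀ p : ℝ × ℝ,
      V p = (2*lam*p.2 + p.2 * Real.cos p.1 - Real.sin p.1, p.2 * Real.cos p.1)) :
    ({p ∈ Set.Icc (-Real.pi) Real.pi ×ˢ Set.Ici (0:ℝ) | V p = 0}
      = if 0 < lam then
          {((0:ℝ),(0:ℝ)), (Real.pi, 0), (-Real.pi, 0), (Real.pi/2, 1/(2*lam))}
        else
          {((0:ℝ),(0:ℝ)), (Real.pi, 0), (-Real.pi, 0), (-(Real.pi/2), -1/(2*lam))}) ∧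
    (0 < lam →
      (Matrix.charpoly
          (!![-(1/(2*(lam:ℂ))), 2*(lam:ℂ); -(1/(2*(lam:ℂ))), 0] :
            Matrix (Fin 2) (Fin 2) ℂ)
        = X^2 + C (1/(2*(lam:ℂ))) * X + C 1) ∧
      (∃ c : ℂ, c^2 = 1 - 16*(lam:ℂ)^2 ∧
        ∀ μ : ℂ, μ^2 + (1/(2*(lam:ℂ)))*μ + 1 = 0 ↔
          (μ = (-1 + c)/(4*(lam:ℂ)) ∨ μ = (-1 - c)/(4*(lam:ℂ)))) ∧
      (∀ μ : ℂ, μ^2 + (1/(2*(lam:ℂ)))*μ + 1 = 0 → μ.re < 0) ∧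
      ((∃ μ : ℂ, μ^2 + (1/(2*(lam:ℂ)))*μ + 1 = 0 ∧ μ.im ≠ 0) ↔ 1/4 < lam)) := by
  constructor
  · -- singular set
    have hpi := Real.pi_pos
    ext ⟨θ, x⟩
    simp only [Set.mem_setOf_eq, Set.mem_prod, Set.mem_Icc, Set.mem_Ici, hV, Prod.mk_eq_zero]
    split_ifs with hp
    · simp only [Set.mem_insert_iff, Set.mem_singleton_iff, Prod.mk.injEq]
      constructor
      · rintro ⟨⟨⟨ha, hb⟩, hx⟩, h1, h2⟩
        rcases mul_eq_zero.1 h2 with hx0 | hc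
        · subst hx0
          simp only [mul_zero, zero_mul, add_zero, zero_sub, neg_eq_zero] at h1
          rcases sinz19 ha hb h1 with h | h | h
          · exact Or.inl ⟨h, rfl⟩
          · exact Or.inr (Or.inl ⟨h, rfl⟩)
          · exact Or.inr (Or.inr (Or.inl ⟨h, rfl⟩))
        · rcases cosz19 ha hb hc with h | h
          · subst h
            rw [Real.sin_pi_div_two, Real.cos_pi_div_two] at h1
            refine Or.inr (Or.inr (Or.inr ⟨rfl, ?_⟩))
            field_simp
            linarith
          · exfalso
            subst h
            rw [Real.sin_neg, Real.cos_neg, Real.sin_pi_div_two, Real.cos_pi_div_two] at h1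
            nlinarith
      · rintro (⟨rfl, rfl⟩ | ⟨rfl, rfl⟩ | ⟨rfl, rfl⟩ | ⟨rfl, rfl⟩)
        · norm_num; linarith
        · norm_num; linarith
        · norm_num; linarith
        · have hx : 0 ≤ 1/(2*lam) := by positivity
          norm_num [Real.sin_pi_div_two, Real.cos_pi_div_two, hx]
          exact ⟨⟨⟨by linarith, by linarith⟩, by linarith⟩, by field_simp; ring⟩
    · have hp' : lam < 0 := lt_of_le_of_ne (not_lt.1 hp) hlam
      simp only [Set.mem_insert_iff, Set.mem_singleton_iff, Prod.mk.injEq]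
      constructor
      · rintro ⟨⟨⟨ha, hb⟩, hx⟩, h1, h2⟩
        rcases mul_eq_zero.1 h2 with hx0 | hc
        · subst hx0
          simp only [mul_zero, zero_mul, add_zero, zero_sub, neg_eq_zero] at h1
          rcases sinz19 ha hb h1 with h | h | h
          · exact Or.inl ⟨h, rfl⟩
          · exact Or.inr (Or.inl ⟨h, rfl⟩)
          · exact Or.inr (Or.inr (Or.inl ⟨h, rfl⟩))
        · rcases cosz19 ha hb hc with h | h
          · exfalso
            subst h
            rw [Real.sin_pi_div_two, Real.cos_pi_div_two] at h1
            nlinarith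
          · subst h
            rw [Real.sin_neg, Real.cos_neg, Real.sin_pi_div_two, Real.cos_pi_div_two] at h1
            refine Or.inr (Or.inr (Or.inr ⟨rfl, ?_⟩))
            field_simp
            linarith
      · rintro (⟨rfl, rfl⟩ | ⟨rfl, rfl⟩ | ⟨rfl, rfl⟩ | ⟨rfl, rfl⟩)
        · norm_num; linarith
        · norm_num; linarith
        · norm_num; linarith
        · have hx : 0 ≤ -1/(2*lam) := by
            rw [div_nonneg_iff]; right; constructor <;> linarith
          norm_num [Real.sin_neg, Real.cos_neg, Real.sin_pi_div_two, Real.cos_pi_div_two]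
          refine ⟨⟨⟨by linarith, by linarith⟩, by linarith [hx]⟩, by field_simp; ring⟩
  · intro hp
    have hL : (lam:ℂ) ≠ 0 := Complex.ofReal_ne_zero.2 (ne_of_gt hp)
    refine ⟨?_, ?_, ?_, ?_⟩
    · -- charpoly
      have e1 : (C (lam:ℂ)⁻¹ * C 2⁻¹ * C 2 * C (lam:ℂ) : ℂ[X]) = 1 := by
        rw [← map_mul, ← map_mul, ← map_mul, ← map_one C]
        congr 1
        field_simp
      rw [Matrix.charpoly, Matrix.det_fin_two]
      simp [Matrix.charmatrix_apply]
      linear_combination e1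
    · -- roots
      obtain ⟨c, hc⟩ := IsAlgClosed.exists_pow_nat_eq (1 - 16*(lam:ℂ)^2) (n := 2) (by norm_num)
      refine ⟨c, hc, fun μ => ?_⟩
      rw [fact19 lam hp c μ hc, mul_eq_zero, sub_eq_zero, sub_eq_zero]
    · -- negative real part
      intro μ h
      obtain ⟨h1, h2⟩ := parts19 lam hp μ h
      rcases mul_eq_zero.1 h2 with hb | hb
      · rw [hb] at h1
        by_contra ha
        push_neg at ha
        nlinarith [mul_nonneg (mul_nonneg hp.le ha) ha]
      · by_contra ha
        push_neg at ha
        nlinarith [mul_nonneg (mul_nonneg hp.le ha) ha]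
    · -- spiral iff
      constructor
      · rintro ⟨μ, h, him0⟩
        obtain ⟨h1, h2⟩ := parts19 lam hp μ h
        have hb : 4*lam*μ.re + 1 = 0 := by
          rcases mul_eq_zero.1 h2 with hb | hb
          · exact absurd hb him0
          · exact hb
        have hb2 : 0 < μ.im^2 := by positivity
        have key2 : 16*lam^2*μ.im^2 = 16*lam^2 - 1 := by
          linear_combination (-8*lam)*h1 + (4*lam*μ.re + 1)*hb
        have h16 : 0 < 16*lam^2*μ.im^2 := by positivity
        by_contra hcon
        push_neg at hcon
        nlinarith [h16, key2, mul_nonneg (sub_nonneg.2 hcon) hp.le]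
      · intro h4
        have hpos : 0 < 16*lam^2 - 1 := by nlinarith
        set s := Real.sqrt (16*lam^2 - 1) with hs
        have hs0 : 0 < s := Real.sqrt_pos.2 hpos
        have hs2 : s^2 = 16*lam^2 - 1 := Real.sq_sqrt hpos.le
        set c : ℂ := (s:ℂ)*Complex.I with hcdef
        have hs2' : ((s:ℂ))^2 = 16*(lam:ℂ)^2 - 1 := by
          exact_mod_cast congrArg (fun x : ℝ => (x:ℂ)) hs2
        have hc : c^2 = 1 - 16*(lam:ℂ)^2 := by
          rw [hcdef, mul_pow, Complex.I_sq, hs2']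
          ring
        refine ⟨(-1 + c)/(4*(lam:ℂ)), ?_, ?_⟩
        · rw [fact19 lam hp c _ hc]
          simp
        · have h4e : (4*(lam:ℂ)) * ((-1 + c)/(4*(lam:ℂ))) = -1 + c := by
            field_simp
          have := congrArg Complex.im h4e
          simp only [Complex.mul_im, Complex.add_im, Complex.add_re, Complex.neg_im,
            Complex.neg_re, Complex.one_im, Complex.one_re, Complex.ofReal_im, Complex.ofReal_re,
            Complex.re_ofNat, Complex.im_ofNat, Complex.mul_re, Complex.I_im, Complex.I_re,
            hcdef] at this
          intro h0
          rw [h0] at this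
          simp at this
          nlinarith [this, hs0]
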